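/- arXiv:math/0703156 — 6 statements merged into one kernel-verified Lean document; each statement's English description precedes it below -/
import Mathlib

section
/- Let P ⊆ ℝⁿ be a Delone set of finite local complexity and let φ, ψ : ℝⁿ → ℝᵐ be differentiable functions that coincide on P. If the derivative maps dφ and dψ are both strongly P-equivariant, then φ − ψ is strongly P-equivariant. -/
open Metric Set

noncomputable section

/-- Euclidean space ℝⁿ. -/
abbrev Euc (n : ℕ) := EuclideanSpace ℝ (Fin n)

/-- The translate `P - x = {p - x : p ∈ P}`. -/
def shiftSet {n : ℕ} (P : Set (Euc n)) (x : Euc n) : Set (Euc n) :=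
  (fun p => p - x) '' P

/-- The `r`-patch of `P` around `x`: `B_r[P - x] = B(0,r) ∩ (P - x)`. -/
def patch {n : ℕ} (P : Set (Euc n)) (r : ℝ) (x : Euc n) : Set (Euc n) :=
  ball (0 : Euc n) r ∩ shiftSet P x

/-- `P` is uniformly discrete: there is a positive minimal distance between points. -/
def UnifDiscrete {n : ℕ} (P : Set (Euc n)) : Prop :=
  ∃ δ > 0, ∀ p ∈ P, ∀ q ∈ P, p ≠ q → δ ≤ ‖p - q‖

/-- `P` is relatively dense: every ball of radius `R` contains a point of `P`. -/
def RelDense {n : ℕ} (P : Set (Euc n)) : Prop :=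
  ∃ R > 0, ∀ x : Euc n, ∃ p ∈ P, ‖p - x‖ < R

/-- `P` has finite local complexity: for each `r > 0`, only finitely many `r`-patches
around points of `P`. -/
def FLC {n : ℕ} (P : Set (Euc n)) : Prop :=
  ∀ r > 0, {s : Set (Euc n) | ∃ x ∈ P, s = patch P r x}.Finite

/-- `f` is `P`-equivariant with range `R`. -/
def EquivRange {n : ℕ} {F : Type*} (P : Set (Euc n)) (R : ℝ) (f : Euc n → F) : Prop :=
  ∀ x y : Euc n, patch P R x = patch P R y → f x = f y

/-- `f` is strongly `P`-equivariant: `P`-equivariant with some finite range `R > 0`. -/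
def StrongEquiv {n : ℕ} {F : Type*} (P : Set (Euc n)) (f : Euc n → F) : Prop :=
  ∃ R > 0, EquivRange P R f

/-- `f`, viewed as a function on the subset `Q`, is `P`-equivariant with range `R`. -/
def EquivRangeOn {n : ℕ} {F : Type*} (P Q : Set (Euc n)) (R : ℝ) (f : Euc n → F) : Prop :=
  ∀ x ∈ Q, ∀ y ∈ Q, patch P R x = patch P R y → f x = f y

/-- `f`, viewed as a function on the subset `Q`, is strongly `P`-equivariant. -/
def StrongEquivOn {n : ℕ} {F : Type*} (P Q : Set (Euc n)) (f : Euc n → F) : Prop :=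
  ∃ R > 0, EquivRangeOn P Q R f

/-- `Q` is locally derivable from `P`. -/
def LocallyDerivable {n : ℕ} (P Q : Set (Euc n)) : Prop :=
  ∃ R > 0, ∀ x y : Euc n, patch P R x = patch P R y →
    ({0} : Set (Euc n)) ∩ shiftSet Q x = ({0} : Set (Euc n)) ∩ shiftSet Q y

/-- Hypothesis (H): for every `r > 0` there is `r' > 0` such that for all `x`,
`B(φ(x), r) ∩ φ(P) ⊆ φ(B(x, r') ∩ P)`. -/
def HypoH {n : ℕ} (P : Set (Euc n)) (φ : Euc n → Euc n) : Prop :=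
  ∀ r > 0, ∃ r' > 0, ∀ x : Euc n, ball (φ x) r ∩ (φ '' P) ⊆ φ '' (ball x r' ∩ P)

/-- The pattern metric `D` on closed subsets of ℝⁿ. -/
def patternDist {n : ℕ} (A B : Set (Euc n)) : ℝ :=
  sInf {ε : ℝ | 0 < ε ∧ Metric.hausdorffDist
    ((ball (0 : Euc n) (1 / ε) ∩ A) ∪ sphere (0 : Euc n) (1 / ε))
    ((ball (0 : Euc n) (1 / ε) ∩ B) ∪ sphere (0 : Euc n) (1 / ε)) ≤ ε}

/-- A continuous `f : ℝⁿ → ℝⁿ` is weakly `P`-equivariant if it is uniformly approximated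
by strongly `P`-equivariant continuous functions. -/
def WeakEquiv {n : ℕ} (P : Set (Euc n)) (f : Euc n → Euc n) : Prop :=
  ∀ ε > 0, ∃ g : Euc n → Euc n, Continuous g ∧ StrongEquiv P g ∧ ∀ x : Euc n, ‖f x - g x‖ < ε

/-- `P` is aperiodic: the only translation fixing `P` is `0`. -/
def IsAperiodicSet {n : ℕ} (P : Set (Euc n)) : Prop :=
  ∀ x : Euc n, shiftSet P x = P → x = 0


lemma mem_patch_iff {n : ℕ} {P : Set (Euc n)} {r : ℝ} {x z : Euc n} :
    z ∈ patch P r x ↔ ‖z‖ < r ∧ z + x ∈ P := by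
  constructor
  · rintro ⟨hz, p, hp, rfl⟩
    exact ⟨by simpa using mem_ball_zero_iff.mp hz, by simpa using hp⟩
  · rintro ⟨h1, h2⟩
    exact ⟨mem_ball_zero_iff.mpr h1, ⟨z + x, h2, by simp⟩⟩

lemma patch_shift_subset {n : ℕ} {P : Set (Euc n)} {R R' : ℝ} {x y v : Euc n}
    (h : patch P R x = patch P R y) (hv : ‖v‖ + R' ≤ R) :
    patch P R' (x + v) ⊆ patch P R' (y + v) := by
  intro z hz
  rw [mem_patch_iff] at hz ⊢
  obtain ⟨h1, h2⟩ := hz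
  refine ⟨h1, ?_⟩
  have hzv : z + v ∈ patch P R x := mem_patch_iff.mpr
    ⟨lt_of_le_of_lt (norm_add_le _ _) (by linarith),
      by rw [show z + v + x = z + (x + v) by abel]; exact h2⟩
  rw [h] at hzv
  have := (mem_patch_iff.mp hzv).2
  rwa [show z + v + y = z + (y + v) by abel] at this

lemma patch_shift {n : ℕ} {P : Set (Euc n)} {R R' : ℝ} {x y v : Euc n}
    (h : patch P R x = patch P R y) (hv : ‖v‖ + R' ≤ R) :
    patch P R' (x + v) = patch P R' (y + v) :=
  Set.Subset.antisymm (patch_shift_subset h hv) (patch_shift_subset h.symm hv)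

lemma patch_mono {n : ℕ} {P : Set (Euc n)} {R R' : ℝ} {x y : Euc n}
    (h : patch P R x = patch P R y) (hR : R' ≤ R) :
    patch P R' x = patch P R' y := by
  have := patch_shift (v := 0) h (by simpa using hR)
  simpa using this

theorem stmt0 {n m : ℕ} (P : Set (Euc n))
    (hUD : UnifDiscrete P) (hRD : RelDense P) (hFLC : FLC P)
    (φ ψ : Euc n → Euc m)
    (hφ : Differentiable ℝ φ) (hψ : Differentiable ℝ ψ)
    (hcoin : ∀ p ∈ P, φ p = ψ p)
    (hdφ : StrongEquiv P (fderiv ℝ φ)) (hdψ : StrongEquiv P (fderiv ℝ ψ)) :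
    StrongEquiv P (fun x => φ x - ψ x) := by
  obtain ⟨R₀, hR₀, hφeq⟩ := hdφ
  obtain ⟨R₁, hR₁, hψeq⟩ := hdψ
  obtain ⟨Rd, hRd, hdense⟩ := hRD
  set M := max R₀ R₁ with hM
  have hM0 : 0 < M := lt_of_lt_of_le hR₀ (le_max_left _ _)
  refine ⟨M + Rd, by positivity, ?_⟩
  intro x y hxy
  obtain ⟨p, hpP, hpx⟩ := hdense x
  set v := p - x with hv
  have hvnorm : ‖v‖ < Rd := hpx
  have hvx : v ∈ patch P (M + Rd) x := mem_patch_iff.mpr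
    ⟨by linarith, by simp [hv, hpP]⟩
  have hvy : v ∈ patch P (M + Rd) y := hxy ▸ hvx
  have hqP : v + y ∈ P := (mem_patch_iff.mp hvy).2
  have hpatch : ∀ t ∈ Icc (0:ℝ) 1, patch P M (x + t • v) = patch P M (y + t • v) := by
    intro t ht
    apply patch_shift hxy
    have h1 : ‖t • v‖ ≤ ‖v‖ := by
      rw [norm_smul, Real.norm_eq_abs, abs_of_nonneg ht.1]
      nlinarith [norm_nonneg v, ht.2]
    linarith
  have hline : ∀ (c : Euc n) (t : ℝ), HasDerivAt (fun t : ℝ => c + t • v) v t := by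
    intro c t
    simpa using ((hasDerivAt_id t).smul_const v).const_add c
  set g : ℝ → Euc m := fun t =>
    (φ (x + t • v) - ψ (x + t • v)) - (φ (y + t • v) - ψ (y + t • v)) with hgdef
  have hg : ∀ t : ℝ, HasDerivAt g
      ((fderiv ℝ φ (x + t • v) v - fderiv ℝ ψ (x + t • v) v)
        - (fderiv ℝ φ (y + t • v) v - fderiv ℝ ψ (y + t • v) v)) t := by
    intro t
    exact (((hφ _).hasFDerivAt.comp_hasDerivAt t (hline x t)).sub
        ((hψ _).hasFDerivAt.comp_hasDerivAt t (hline x t))).sub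
      (((hφ _).hasFDerivAt.comp_hasDerivAt t (hline y t)).sub
        ((hψ _).hasFDerivAt.comp_hasDerivAt t (hline y t)))
  have hg0 : ∀ t ∈ Icc (0:ℝ) 1, HasDerivAt g 0 t := by
    intro t ht
    have e1 : fderiv ℝ φ (x + t • v) = fderiv ℝ φ (y + t • v) :=
      hφeq _ _ (patch_mono (hpatch t ht) (le_max_left _ _))
    have e2 : fderiv ℝ ψ (x + t • v) = fderiv ℝ ψ (y + t • v) :=
      hψeq _ _ (patch_mono (hpatch t ht) (le_max_right _ _))
    have := hg t
    rw [e1, e2] at this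
    simpa using this
  have hcont : ContinuousOn g (Icc 0 1) :=
    (continuous_iff_continuousAt.mpr fun t => (hg t).continuousAt).continuousOn
  have hconst := constant_of_has_deriv_right_zero hcont
    (fun t ht => (hg0 t (Ico_subset_Icc_self ht)).hasDerivWithinAt) 1 (by norm_num)
  have hg1 : g 1 = 0 := by
    have hx1 : x + (1:ℝ) • v = p := by rw [one_smul, hv]; abel
    have hy1 : y + (1:ℝ) • v = v + y := by rw [one_smul]; abel
    simp only [hgdef, hx1, hy1, hcoin p hpP, hcoin _ hqP, sub_self, sub_zero]
  have hg0' : g 0 = (φ x - ψ x) - (φ y - ψ y) := by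
    simp [hgdef]
  have : (φ x - ψ x) - (φ y - ψ y) = 0 := by
    rw [← hg0', ← hconst, hg1]
  simpa [sub_eq_zero] using this
end
end

section
/- Let P ⊆ ℝⁿ be a uniformly discrete set of finite local complexity and let φ : ℝⁿ → ℝⁿ be a differentiable function which satisfies Hypothesis (H) for P and whose derivative map dφ is strongly P-equivariant. Then φ(P) has finite local complexity, i.e. for every r > 0 the collection of sets {B_r[φ(P) − z] : z ∈ φ(P)} is finite. -/
open Metric Set

noncomputable section

lemma mem_patch {n : ℕ} {P : Set (Euc n)} {r : ℝ} {x u : Euc n} :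
    u ∈ patch P r x ↔ ‖u‖ < r ∧ u + x ∈ P := by
  simp only [patch, shiftSet, Set.mem_inter_iff, mem_ball, dist_zero_right, Set.mem_image]
  constructor
  · rintro ⟨h1, p, hp, rfl⟩
    exact ⟨h1, by simpa using hp⟩
  · rintro ⟨h1, h2⟩
    exact ⟨h1, u + x, h2, by abel⟩

lemma patch_restrict {n : ℕ} {P : Set (Euc n)} {s t : ℝ} (hst : s ≤ t) {x y : Euc n}
    (h : patch P t x = patch P t y) : patch P s x = patch P s y := by
  ext u
  simp only [mem_patch]
  constructor <;> rintro ⟨hu, hm⟩ <;> refine ⟨hu, ?_⟩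
  · exact (mem_patch.mp (h ▸ mem_patch.mpr ⟨hu.trans_le hst, hm⟩)).2
  · exact (mem_patch.mp (h.symm ▸ mem_patch.mpr ⟨hu.trans_le hst, hm⟩)).2

lemma patch_shift_s8 {n : ℕ} {P : Set (Euc n)} {R r' : ℝ} {p₁ p₂ w : Euc n}
    (hw : ‖w‖ < r') (h : patch P (R + r') p₁ = patch P (R + r') p₂) :
    patch P R (p₁ + w) = patch P R (p₂ + w) := by
  ext u
  simp only [mem_patch]
  have key : ∀ q₁ q₂ : Euc n, patch P (R + r') q₁ = patch P (R + r') q₂ →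
      ‖u‖ < R ∧ u + (q₁ + w) ∈ P → ‖u‖ < R ∧ u + (q₂ + w) ∈ P := by
    rintro q₁ q₂ hq ⟨hu, hm⟩
    refine ⟨hu, ?_⟩
    have h1 : u + w ∈ patch P (R + r') q₁ := by
      refine mem_patch.mpr ⟨lt_of_le_of_lt (norm_add_le _ _) (by linarith), ?_⟩
      have : u + w + q₁ = u + (q₁ + w) := by abel
      rwa [this]
    have h2 := mem_patch.mp (hq ▸ h1)
    have : u + (q₂ + w) = u + w + q₂ := by abel
    rw [this]
    exact h2.2
  exact ⟨key p₁ p₂ h, key p₂ p₁ h.symm⟩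

lemma incr_eq {n : ℕ} {P : Set (Euc n)} {φ : Euc n → Euc n} (hφ : Differentiable ℝ φ)
    {R r' : ℝ} (hr' : 0 < r') (hEq : EquivRange P R (fderiv ℝ φ)) {p₁ p₂ v : Euc n}
    (hv : ‖v‖ < r') (h : patch P (R + r') p₁ = patch P (R + r') p₂) :
    φ (p₁ + v) - φ p₁ = φ (p₂ + v) - φ p₂ := by
  set c : Euc n := p₂ - p₁ with hc
  set f : Euc n → Euc n := fun x => φ x - φ (x + c) with hf
  have hderiv : ∀ x ∈ ball p₁ r', HasFDerivWithinAt f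
      ((0 : Euc n →L[ℝ] Euc n)) (ball p₁ r') x := by
    intro x hx
    have hx' : ‖x - p₁‖ < r' := by
      simpa [dist_eq_norm] using hx
    have hD : fderiv ℝ φ x = fderiv ℝ φ (x + c) := by
      have hd := hEq _ _ (patch_shift_s8 hx' h)
      have e1 : p₁ + (x - p₁) = x := by abel
      have e2 : p₂ + (x - p₁) = x + c := by rw [hc]; abel
      rw [e1, e2] at hd
      exact hd
    have H1 : HasFDerivAt φ (fderiv ℝ φ x) x := (hφ x).hasFDerivAt
    have H2 : HasFDerivAt (fun x => φ (x + c)) (fderiv ℝ φ (x + c)) x := by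
      have := ((hφ (x + c)).hasFDerivAt).comp x ((hasFDerivAt_id x).add_const c)
      simpa [Function.comp_def] using this
    have H3 : HasFDerivAt f (fderiv ℝ φ x - fderiv ℝ φ (x + c)) x := H1.sub H2
    rw [← hD, sub_self] at H3
    exact H3.hasFDerivWithinAt
  have hconv : Convex ℝ (ball p₁ r') := convex_ball _ _
  have hmem1 : p₁ ∈ ball p₁ r' := mem_ball_self hr'
  have hmem2 : p₁ + v ∈ ball p₁ r' := by
    simp [dist_eq_norm]
    simpa using hv
  have hb := hconv.norm_image_sub_le_of_norm_hasFDerivWithin_le hderiv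
    (fun x _ => le_of_eq norm_zero) hmem1 hmem2
  have : ‖f (p₁ + v) - f p₁‖ ≤ 0 := by simpa using hb
  have hz : f (p₁ + v) = f p₁ := by
    have := norm_le_zero_iff.mp this
    exact sub_eq_zero.mp this
  have e1 : p₁ + c = p₂ := by rw [hc]; abel
  have e2 : p₁ + v + c = p₂ + v := by rw [hc]; abel
  simp only [hf, e1, e2] at hz
  exact sub_eq_sub_iff_sub_eq_sub.mpr hz

lemma patch_image_eq {n : ℕ} {P : Set (Euc n)} {φ : Euc n → Euc n} {r r' : ℝ}
    (hH' : ∀ x : Euc n, ball (φ x) r ∩ (φ '' P) ⊆ φ '' (ball x r' ∩ P)) (p : Euc n) :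
    patch (φ '' P) r (φ p) = ball 0 r ∩ ((fun v => φ (p + v) - φ p) '' patch P r' p) := by
  ext y
  constructor
  · intro hy
    have hy' := mem_patch.mp hy
    have hmem : y + φ p ∈ ball (φ p) r ∩ (φ '' P) := by
      constructor
      · simp [dist_eq_norm]
        simpa using hy'.1
      · exact hy'.2
    obtain ⟨q, ⟨hq1, hq2⟩, hq3⟩ := hH' p hmem
    refine ⟨by simpa [dist_zero_right] using hy'.1, q - p, ?_, ?_⟩
    · refine mem_patch.mpr ⟨?_, by simpa using hq2⟩
      simpa [dist_eq_norm] using hq1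
    · show φ (p + (q - p)) - φ p = y
      have : p + (q - p) = q := by abel
      rw [this, hq3]
      abel
  · rintro ⟨hb, v, hv, rfl⟩
    have hv' := mem_patch.mp hv
    refine mem_patch.mpr ⟨by simpa [dist_zero_right] using hb, ?_⟩
    have : φ (p + v) - φ p + φ p = φ (p + v) := by abel
    rw [this]
    exact ⟨p + v, by rw [add_comm]; exact hv'.2, rfl⟩

theorem stmt8 {n : ℕ} (P : Set (Euc n)) (hUD : UnifDiscrete P) (hFLC : FLC P)
    (φ : Euc n → Euc n) (hφ : Differentiable ℝ φ)
    (hH : HypoH P φ) (hdφ : StrongEquiv P (fderiv ℝ φ)) :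
    FLC (φ '' P) := by
  intro r hr
  obtain ⟨R, hR, hEq⟩ := hdφ
  obtain ⟨r', hr', hH'⟩ := hH r hr
  set R' : ℝ := R + r' with hR'
  classical
  -- key: equal big patches of P give equal patches of φ(P)
  have key : ∀ p₁ p₂ : Euc n, patch P R' p₁ = patch P R' p₂ →
      patch (φ '' P) r (φ p₁) = patch (φ '' P) r (φ p₂) := by
    intro p₁ p₂ h
    rw [patch_image_eq hH' p₁, patch_image_eq hH' p₂]
    have hsmall : patch P r' p₁ = patch P r' p₂ :=
      patch_restrict (by linarith) h
    rw [hsmall]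
    congr 1
    apply Set.image_congr
    intro v hv
    exact incr_eq hφ hr' hEq (mem_patch.mp hv).1 h
  set g : Set (Euc n) → Euc n := fun t =>
    if h : ∃ p ∈ P, t = patch P R' p then h.choose else 0 with hg
  have hS := hFLC R' (by linarith)
  apply Set.Finite.subset (hS.image (fun t => patch (φ '' P) r (φ (g t))))
  rintro s ⟨z, ⟨p, hp, rfl⟩, rfl⟩
  have ht : ∃ p' ∈ P, patch P R' p = patch P R' p' := ⟨p, hp, rfl⟩
  refine ⟨patch P R' p, ⟨p, hp, rfl⟩, ?_⟩
  have hgt : g (patch P R' p) = ht.choose := dif_pos ht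
  obtain ⟨hq, hpatch⟩ := ht.choose_spec
  exact key (g (patch P R' p)) p (by rw [hgt]; exact hpatch.symm)
end
end

section
/- Let P ⊆ ℝⁿ be a uniformly discrete set of finite local complexity and let φ : ℝⁿ → ℝⁿ be a differentiable function whose derivative map dφ is strongly P-equivariant. If x ∈ ℝⁿ satisfies P − x = P, then φ(P) − φ(x) = φ(P) − φ(0). -/
open Metric Set

noncomputable section

theorem stmt9 {n : ℕ} (P : Set (Euc n)) (hUD : UnifDiscrete P) (hFLC : FLC P)
    (φ : Euc n → Euc n) (hφ : Differentiable ℝ φ)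
    (hdφ : StrongEquiv P (fderiv ℝ φ))
    (x : Euc n) (hx : shiftSet P x = P) :
    shiftSet (φ '' P) (φ x) = shiftSet (φ '' P) (φ 0) := by
  obtain ⟨R, hR, hEq⟩ := hdφ
  -- shift of a shift
  have hshift : ∀ y : Euc n, shiftSet P (y + x) = shiftSet P y := by
    intro y
    have : shiftSet P (y + x) = (fun p => p - y) '' (shiftSet P x) := by
      simp only [shiftSet, Set.image_image]
      apply Set.image_congr'
      intro p
      abel_nf
    rw [this, hx]; rfl
  have hpatch : ∀ y : Euc n, patch P R (y + x) = patch P R y := by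
    intro y; unfold patch; rw [hshift]
  have hderiv : ∀ y : Euc n, fderiv ℝ φ (y + x) = fderiv ℝ φ y := fun y =>
    hEq (y + x) y (hpatch y)
  -- ψ y = φ (y + x) - φ y has zero derivative
  set ψ : Euc n → Euc n := fun y => φ (y + x) - φ y with hψ
  have hψd : ∀ y : Euc n, HasFDerivAt ψ (0 : Euc n →L[ℝ] Euc n) y := by
    intro y
    have h1 : HasFDerivAt (fun y => φ (y + x)) (fderiv ℝ φ (y + x)) y := by
      have := (hφ (y + x)).hasFDerivAt.comp y ((hasFDerivAt_id y).add_const x)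
      simpa [Function.comp_def] using this
    have h2 := h1.sub (hφ y).hasFDerivAt
    rw [hderiv y, sub_self] at h2
    exact h2
  have hconst : ∀ y : Euc n, ψ y = ψ 0 := by
    intro y
    apply is_const_of_fderiv_eq_zero (fun z => (hψd z).differentiableAt)
    intro z
    exact (hψd z).fderiv
  have key : ∀ y : Euc n, φ (y + x) - φ y = φ x - φ 0 := by
    intro y
    have := hconst y
    simp only [hψ, zero_add] at this
    exact this
  -- membership facts about P
  have hmem1 : ∀ p ∈ P, p - x ∈ P := by
    intro p hp
    rw [← hx]; exact ⟨p, hp, rfl⟩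
  have hmem2 : ∀ p ∈ P, p + x ∈ P := by
    intro p hp
    rw [← hx] at hp
    obtain ⟨q, hq, rfl⟩ := hp
    simpa using hq
  ext z
  simp only [shiftSet, Set.mem_image, exists_exists_and_eq_and]
  constructor
  · rintro ⟨p, hp, rfl⟩
    refine ⟨p - x, hmem1 p hp, ?_⟩
    have := key (p - x)
    simp only [sub_add_cancel] at this
    -- this : φ p - φ (p - x) = φ x - φ 0
    have h := this
    abel_nf at h ⊢
    linear_combination (norm := abel_nf) -h
  · rintro ⟨p, hp, rfl⟩
    refine ⟨p + x, hmem2 p hp, ?_⟩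
    have h := key p
    linear_combination (norm := abel_nf) h
end
end

section
/- Let P ⊆ ℝⁿ be a Delone set of finite local complexity, let φ : ℝⁿ → ℝⁿ be a function, and let g be an invertible linear map of ℝⁿ. If φ − g is strongly P-equivariant, then φ(P) is a Delone set (uniformly discrete and relatively dense). -/
open Metric Set

noncomputable section

/-- A separated subset of a ball is finite. -/
lemma sep_finite {n : ℕ} {δ C : ℝ} (hδ : 0 < δ) (s : Set (Euc n))
    (hb : s ⊆ ball (0 : Euc n) C)
    (hsep : s.Pairwise fun x y => δ ≤ dist x y) : s.Finite := by
  have htb : TotallyBounded s :=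
    ((isCompact_closedBall (0 : Euc n) C).totallyBounded).subset
      (hb.trans ball_subset_closedBall)
  obtain ⟨t, htf, hcov⟩ := totallyBounded_iff.mp htb (δ / 2) (by positivity)
  have : s ⊆ ⋃ y ∈ t, s ∩ ball y (δ / 2) := by
    intro x hx
    obtain ⟨y, hy, hxy⟩ := by simpa using hcov hx
    exact Set.mem_biUnion hy ⟨hx, hxy⟩
  refine Set.Finite.subset (Set.Finite.biUnion htf fun y _ => ?_) this
  refine Set.Subsingleton.finite fun a ha b hb => ?_
  by_contra hab
  have := hsep ha.1 hb.1 hab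
  have h1 : dist a b < δ := by
    calc dist a b ≤ dist a y + dist y b := dist_triangle a y b
    _ < δ / 2 + δ / 2 := by
        have := ha.2; have hb2 := hb.2
        rw [mem_ball] at this hb2
        rw [dist_comm y b]; linarith
    _ = δ := by ring
  linarith

set_option synthInstance.maxHeartbeats 800000 in
theorem stmt12 {n : ℕ} (P : Set (Euc n))
    (hUD : UnifDiscrete P) (hRD : RelDense P) (hFLC : FLC P)
    (φ : Euc n → Euc n) (g : Euc n ≃ₗ[ℝ] Euc n)
    (hs : StrongEquiv P (fun x => φ x - g x)) :
    UnifDiscrete (φ '' P) ∧ RelDense (φ '' P) := by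
  classical
  obtain ⟨R, hR, hEq⟩ := hs
  obtain ⟨δ₀, hδ₀, hPsep⟩ := hUD
  obtain ⟨R₀, hR₀, hPdense⟩ := hRD
  set G := g.toContinuousLinearEquiv with hGdef
  have hGfun : (⇑G : Euc n → Euc n) = ⇑g := g.coe_toContinuousLinearEquiv'
  set a := ‖(G : Euc n →L[ℝ] Euc n)‖ with hadef
  set b := ‖(G.symm : Euc n →L[ℝ] Euc n)‖ with hbdef
  have ha0 : 0 ≤ a := norm_nonneg _
  have hb0 : 0 ≤ b := norm_nonneg _
  have hga : ∀ x : Euc n, ‖g x‖ ≤ a * ‖x‖ := fun x => by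
    have := (G : Euc n →L[ℝ] Euc n).le_opNorm x
    simpa [ContinuousLinearEquiv.coe_coe, hGfun] using this
  have hgb : ∀ x : Euc n, ‖x‖ ≤ b * ‖g x‖ := fun x => by
    have h2 := (G.symm : Euc n →L[ℝ] Euc n).le_opNorm (g x)
    have h3 : G.symm (g x) = x := by
      rw [← congrFun hGfun x]; exact G.symm_apply_apply x
    simpa [ContinuousLinearEquiv.coe_coe, h3] using h2
  -- finiteness of the set of values of h := φ - g on P
  have hSfin := hFLC R hR
  have hHfin : ((fun x => φ x - g x) '' P).Finite := by
    have hsub : (fun x => φ x - g x) '' P ⊆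
        (fun s : Set (Euc n) => if hx : ∃ x ∈ P, s = patch P R x then
          φ hx.choose - g hx.choose else 0) '' {s | ∃ x ∈ P, s = patch P R x} := by
      rintro _ ⟨p, hp, rfl⟩
      refine ⟨patch P R p, ⟨p, hp, rfl⟩, ?_⟩
      have hex : ∃ x ∈ P, patch P R p = patch P R x := ⟨p, hp, rfl⟩
      simp only
      rw [dif_pos hex]
      exact hEq hex.choose p hex.choose_spec.2.symm
    exact (hSfin.image _).subset hsub
  obtain ⟨M₀, hM₀⟩ := (hHfin.image norm).bddAbove
  set M := max M₀ 0 with hMdef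
  have hM0 : 0 ≤ M := le_max_right _ _
  have hMb : ∀ p ∈ P, ‖φ p - g p‖ ≤ M := fun p hp =>
    le_trans (hM₀ (Set.mem_image_of_mem _ (Set.mem_image_of_mem _ hp))) (le_max_left _ _)
  -- finiteness of the bounded part of the difference set of P
  set C := b * (2 * M + 1) + 1 with hCdef
  have hC : 0 < C := by positivity
  have hSC := hFLC C hC
  have hpatchfin : ∀ s ∈ {s : Set (Euc n) | ∃ x ∈ P, s = patch P C x}, s.Finite := by
    rintro s ⟨x, hx, rfl⟩
    refine sep_finite hδ₀ _ (fun v hv => hv.1) ?_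
    rintro u ⟨hu1, p, hp, rfl⟩ v ⟨hv1, q, hq, rfl⟩ huv
    have hpq : p ≠ q := fun e => huv (by rw [e])
    calc δ₀ ≤ ‖p - q‖ := hPsep p hp q hq hpq
    _ = dist (p - x) (q - x) := by rw [dist_eq_norm]; congr 1; abel
  set D := ⋃₀ {s : Set (Euc n) | ∃ x ∈ P, s = patch P C x} with hDdef
  have hDfin : D.Finite := Set.Finite.sUnion hSC hpatchfin
  -- the finite set of candidate small differences of φ '' P
  set F := (fun t : Euc n × Euc n × Euc n => g t.1 + t.2.1 - t.2.2) ''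
    (D ×ˢ (((fun x => φ x - g x) '' P) ×ˢ ((fun x => φ x - g x) '' P))) with hFdef
  have hFfin : F.Finite := ((hDfin.prod (hHfin.prod hHfin)).image _)
  set N := insert (1 : ℝ) (norm '' (F \ {0})) with hNdef
  have hNfin : N.Finite := (((hFfin.subset Set.diff_subset).image norm).insert 1)
  obtain ⟨m, hmN, hmin⟩ := Set.exists_min_image N id hNfin ⟨1, Set.mem_insert 1 _⟩
  have hm1 : m ≤ 1 := by simpa using hmin 1 (Set.mem_insert 1 _)
  have hm0 : 0 < m := by
    rcases hmN with h | ⟨w, ⟨hwF, hw0⟩, rfl⟩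
    · rw [h]; norm_num
    · exact norm_pos_iff.mpr (by simpa using hw0)
  constructor
  · -- uniform discreteness
    refine ⟨m, hm0, ?_⟩
    rintro _ ⟨p, hp, rfl⟩ _ ⟨q, hq, rfl⟩ hne
    by_cases hcase : ‖g (p - q)‖ < 2 * M + 1
    · have hpq : ‖p - q‖ < C := by
        have h1 := hgb (p - q)
        have h2 : b * ‖g (p - q)‖ ≤ b * (2 * M + 1) :=
          mul_le_mul_of_nonneg_left hcase.le hb0
        rw [hCdef]; linarith
      have hD : p - q ∈ D := by
        refine ⟨patch P C q, ⟨q, hq, rfl⟩, ?_, ⟨p, hp, rfl⟩⟩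
        simpa [mem_ball_zero_iff] using hpq
      have hw : φ p - φ q ∈ F := by
        refine ⟨(p - q, φ p - g p, φ q - g q),
          ⟨hD, Set.mem_image_of_mem _ hp, Set.mem_image_of_mem _ hq⟩, ?_⟩
        simp only [map_sub]; abel
      have hne' : φ p - φ q ≠ 0 := sub_ne_zero.mpr hne
      have := hmin ‖φ p - φ q‖ (Set.mem_insert_of_mem _ ⟨φ p - φ q, ⟨hw, hne'⟩, rfl⟩)
      simpa using this
    · push_neg at hcase
      have e2 : g (p - q) = (φ p - φ q) - ((φ p - g p) - (φ q - g q)) := by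
        rw [map_sub]; abel
      have t3 : ‖g (p - q)‖ ≤ ‖φ p - φ q‖ + (‖φ p - g p‖ + ‖φ q - g q‖) := by
        rw [e2]
        exact le_trans (norm_sub_le _ _) (add_le_add le_rfl (norm_sub_le _ _))
      have t1 := hMb p hp
      have t2 := hMb q hq
      linarith
  · -- relative density
    have hpos : 0 < a * R₀ + M + 1 := by
      have : 0 ≤ a * R₀ := mul_nonneg ha0 hR₀.le
      linarith
    refine ⟨a * R₀ + M + 1, hpos, fun y => ?_⟩
    obtain ⟨p, hp, hpx⟩ := hPdense (g.symm y)
    refine ⟨φ p, Set.mem_image_of_mem _ hp, ?_⟩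
    have e : φ p - y = g (p - g.symm y) + (φ p - g p) := by
      rw [map_sub, g.apply_symm_apply]; abel
    have hle : a * ‖p - g.symm y‖ ≤ a * R₀ := mul_le_mul_of_nonneg_left hpx.le ha0
    calc ‖φ p - y‖ ≤ ‖g (p - g.symm y)‖ + ‖φ p - g p‖ := by rw [e]; exact norm_add_le _ _
    _ ≤ a * ‖p - g.symm y‖ + M := add_le_add (hga _) (hMb p hp)
    _ < a * R₀ + M + 1 := by linarith
end
end

section
/- Let P ⊆ ℝⁿ be a uniformly discrete set of finite local complexity. For every r > 0 there exists ε with 0 < ε < 1 such that for every differentiable function φ : ℝⁿ → ℝⁿ with sup_{x ∈ ℝⁿ} ‖Dφ(x) − I‖ < ε the following holds, where r' := r(1 − ε)⁻¹: for all x, y ∈ P, if B_{r'}[φ(P) − φ(x)] = B_{r'}[φ(P) − φ(y)], then B_r[P − x] = B_r[P − y] and for every h ∈ B_r[P − x] one has φ(x + h) − φ(x) = φ(y + h) − φ(y). -/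
open Metric Set

noncomputable section

lemma sep_finite_s15 {E : Type*} [MetricSpace E] {s : Set E} {δ : ℝ} (hδ : 0 < δ)
    (hsep : ∀ p ∈ s, ∀ q ∈ s, p ≠ q → δ ≤ dist p q) (hb : Bornology.IsBounded s)
    [ProperSpace E] : s.Finite := by
  by_contra hinf
  replace hinf : s.Infinite := hinf
  have htb : TotallyBounded s := (hb.isCompact_closure).totallyBounded.subset subset_closure
  obtain ⟨t, htfin, hcov⟩ := (Metric.totallyBounded_iff).1 htb (δ/2) (by linarith)
  choose f hf using fun x : s => by
    have := hcov x.2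
    simp only [Set.mem_iUnion] at this
    exact this
  have : Infinite s := hinf.to_subtype
  have : Finite {y // y ∈ t} := htfin.to_subtype
  obtain ⟨a, b, hab, heq⟩ := Finite.exists_ne_map_eq_of_infinite
    (fun x : s => (⟨f x, (hf x).1⟩ : {y // y ∈ t}))
  have h1 := (hf a).2
  have h2 := (hf b).2
  rw [Subtype.mk_eq_mk] at heq
  rw [heq] at h1
  have hd : dist (a : E) b < δ := by
    calc dist (a : E) b ≤ dist (a : E) (f b) + dist (f b) (b : E) := dist_triangle _ _ _
    _ < δ/2 + δ/2 := by
        rw [mem_ball] at h1 h2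
        rw [dist_comm (f b) (b:E)]; linarith
    _ = δ := by ring
  exact absurd (hsep a a.2 b b.2 (fun h => hab (Subtype.ext h))) (by push_neg; exact hd)

theorem stmt15 {n : ℕ} (P : Set (Euc n)) (hUD : UnifDiscrete P) (hFLC : FLC P) :
    ∀ r > 0, ∃ ε : ℝ, 0 < ε ∧ ε < 1 ∧
      ∀ φ : Euc n → Euc n, Differentiable ℝ φ →
      (∀ x : Euc n, ‖fderiv ℝ φ x - ContinuousLinearMap.id ℝ (Euc n)‖ < ε) →
      ∀ x ∈ P, ∀ y ∈ P,
        patch (φ '' P) (r * (1 - ε)⁻¹) (φ x) = patch (φ '' P) (r * (1 - ε)⁻¹) (φ y) →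
        patch P r x = patch P r y ∧
          ∀ h ∈ patch P r x, φ (x + h) - φ x = φ (y + h) - φ y := by
  obtain ⟨δ, hδ, hsep⟩ := hUD
  intro r hr
  -- the set of short difference vectors is finite
  set D : Set (Euc n) := {v | ∃ p ∈ P, ∃ z ∈ P, v = p - z ∧ ‖v‖ < 4*r} with hDdef
  have hDfin : D.Finite := by
    have hpat := hFLC (4*r) (by linarith)
    have hsub : D ⊆ ⋃₀ {s | ∃ x ∈ P, s = patch P (4*r) x} := by
      rintro v ⟨p, hp, z, hz, rfl, hv⟩
      exact ⟨patch P (4*r) z, ⟨z, hz, rfl⟩, mem_ball_zero_iff.2 hv, ⟨p, hp, rfl⟩⟩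
    refine Set.Finite.subset (Set.Finite.sUnion hpat ?_) hsub
    rintro s ⟨z, hz, rfl⟩
    refine sep_finite_s15 hδ ?_ ?_
    · rintro a ⟨-, p, hp, rfl⟩ b ⟨-, q, hq, rfl⟩ hne
      rw [dist_eq_norm]
      have hab : p - z - (q - z) = p - q := by abel
      rw [hab]
      exact hsep p hp q hq (by rintro rfl; exact hne rfl)
    · exact (isBounded_ball).subset inter_subset_left
  -- minimal gap η between distinct elements of D
  have hη : ∃ η > 0, ∀ d ∈ D, ∀ d' ∈ D, ‖d - d'‖ < η → d = d' := by
    set S : Set ℝ := (fun q : Euc n × Euc n => ‖q.1 - q.2‖) '' ((D ×ˢ D) ∩ {q | q.1 ≠ q.2})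
      with hSdef
    have hSfin : S.Finite := (((hDfin.prod hDfin).inter_of_left _).image _)
    by_cases hS : S.Nonempty
    · refine ⟨sInf S, ?_, ?_⟩
      · obtain ⟨⟨d, d'⟩, ⟨⟨hd, hd'⟩, hne⟩, hval⟩ := hS.csInf_mem hSfin
        rw [← hval]
        exact norm_sub_pos_iff.2 hne
      · intro d hd d' hd' hlt
        by_contra hne
        have hmem : ‖d - d'‖ ∈ S := ⟨(d, d'), ⟨⟨hd, hd'⟩, hne⟩, rfl⟩
        exact absurd (csInf_le hSfin.bddBelow hmem) (by linarith)
    · refine ⟨1, one_pos, fun d hd d' hd' _ => ?_⟩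
      by_contra hne
      exact hS ⟨‖d - d'‖, (d, d'), ⟨⟨hd, hd'⟩, hne⟩, rfl⟩
  obtain ⟨η, hηpos, hηkey⟩ := hη
  set ε : ℝ := min (1/2) (η / (10*r)) with hεdef
  have hεpos : 0 < ε := lt_min (by norm_num) (div_pos hηpos (by linarith))
  have hε2 : ε ≤ 1/2 := min_le_left _ _
  have hεη : ε ≤ η / (10*r) := min_le_right _ _
  have h1e : (0:ℝ) < 1 - ε := by linarith
  refine ⟨ε, hεpos, by linarith, ?_⟩
  intro φ hdiff hder
  -- mean value estimate
  have hg : ∀ a b : Euc n, ‖(φ a - a) - (φ b - b)‖ ≤ ε * ‖a - b‖ := by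
    intro a b
    have hgd : ∀ z ∈ (univ : Set (Euc n)), DifferentiableAt ℝ (fun w => φ w - w) z :=
      fun z _ => (hdiff z).sub differentiableAt_fun_id
    have hbound : ∀ z ∈ (univ : Set (Euc n)), ‖fderiv ℝ (fun w => φ w - w) z‖ ≤ ε := by
      intro z _
      rw [fderiv_fun_sub (hdiff z) differentiableAt_fun_id, fderiv_id']
      exact (hder z).le
    have := convex_univ.norm_image_sub_le_of_norm_fderiv_le hgd hbound (mem_univ b) (mem_univ a)
    simpa using this
  have key : ∀ x ∈ P, ∀ y ∈ P,
      patch (φ '' P) (r * (1 - ε)⁻¹) (φ x) = patch (φ '' P) (r * (1 - ε)⁻¹) (φ y) →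
      ∀ p ∈ P, ‖p - x‖ < r → (y + (p - x)) ∈ P ∧ φ (y + (p - x)) - φ y = φ p - φ x := by
    intro x hx y hy hpq p hp hpr
    have h1 : ‖(φ p - p) - (φ x - x)‖ ≤ ε * ‖p - x‖ := hg p x
    have h2 : ‖φ p - φ x‖ ≤ ‖p - x‖ + ε * ‖p - x‖ := by
      calc ‖φ p - φ x‖ = ‖((φ p - p) - (φ x - x)) + (p - x)‖ := by congr 1; abel
      _ ≤ ‖(φ p - p) - (φ x - x)‖ + ‖p - x‖ := norm_add_le _ _
      _ ≤ ‖p - x‖ + ε * ‖p - x‖ := by linarith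
    have hnorm1 : ‖φ p - φ x‖ < r * (1 - ε)⁻¹ := by
      rw [show r * (1-ε)⁻¹ = r / (1-ε) from (div_eq_mul_inv r _).symm, lt_div_iff₀ h1e]
      nlinarith [norm_nonneg (p - x), mul_nonneg hεpos.le (norm_nonneg (p - x)), sq_nonneg ε]
    have hmem : φ p - φ x ∈ patch (φ '' P) (r * (1-ε)⁻¹) (φ x) :=
      ⟨mem_ball_zero_iff.2 hnorm1, φ p, ⟨p, hp, rfl⟩, rfl⟩
    rw [hpq] at hmem
    simp only [patch, shiftSet, mem_inter_iff, mem_image, mem_ball_zero_iff] at hmem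
    obtain ⟨hball, w, ⟨q, hq, rfl⟩, hw⟩ := hmem
    -- hw : φ q - φ y = φ p - φ x ; hball : ‖φ p - φ x‖ < r * (1-ε)⁻¹
    have hball' : ‖φ q - φ y‖ < r * (1-ε)⁻¹ := by rw [hw]; exact hball
    have h4 : ‖(φ q - q) - (φ y - y)‖ ≤ ε * ‖q - y‖ := hg q y
    have h5 : ‖q - y‖ ≤ ‖φ q - φ y‖ + ε * ‖q - y‖ := by
      calc ‖q - y‖ = ‖(φ q - φ y) - ((φ q - q) - (φ y - y))‖ := by congr 1; abel
      _ ≤ ‖φ q - φ y‖ + ‖(φ q - q) - (φ y - y)‖ := norm_sub_le _ _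
      _ ≤ ‖φ q - φ y‖ + ε * ‖q - y‖ := by linarith
    have hb2 : ‖φ q - φ y‖ * (1 - ε) < r := by
      have hm := mul_lt_mul_of_pos_right hball' h1e
      rwa [mul_assoc, inv_mul_cancel₀ (ne_of_gt h1e), mul_one] at hm
    have hqy : ‖q - y‖ < 4*r := by
      have h7 : (‖q - y‖ - ε * ‖q - y‖) * (1 - ε) ≤ ‖φ q - φ y‖ * (1 - ε) :=
        mul_le_mul_of_nonneg_right (by linarith) h1e.le
      nlinarith [norm_nonneg (q - y), mul_nonneg hεpos.le (norm_nonneg (q - y)),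
        mul_nonneg (mul_nonneg (by linarith : (0:ℝ) ≤ 1/2 - ε)
          (by linarith : (0:ℝ) ≤ 3/2 - ε)) (norm_nonneg (q - y))]
    have hpxD : p - x ∈ D := ⟨p, hp, x, hx, rfl, by linarith⟩
    have hqyD : q - y ∈ D := ⟨q, hq, y, hy, rfl, hqy⟩
    have h8 : ε * (10*r) ≤ η := (le_div_iff₀ (by linarith : (0:ℝ) < 10*r)).1 hεη
    have hdiff2 : ‖(q - y) - (p - x)‖ < η := by
      have heq2 : (q - y) - (p - x) = ((φ p - p) - (φ x - x)) - ((φ q - q) - (φ y - y)) := by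
        have hh : ((φ p - p) - (φ x - x)) - ((φ q - q) - (φ y - y))
            = ((φ p - φ x) - (φ q - φ y)) + ((q - y) - (p - x)) := by abel
        rw [hh, hw]; abel
      rw [heq2]
      have h9 : ‖((φ p - p) - (φ x - x)) - ((φ q - q) - (φ y - y))‖
          ≤ ε * ‖p - x‖ + ε * ‖q - y‖ := le_trans (norm_sub_le _ _) (by linarith)
      have h10 : ε * ‖p - x‖ ≤ ε * r := mul_le_mul_of_nonneg_left hpr.le hεpos.le
      have h11 : ε * ‖q - y‖ ≤ ε * (4*r) := mul_le_mul_of_nonneg_left hqy.le hεpos.le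
      nlinarith
    have hqp : q - y = p - x := hηkey _ hqyD _ hpxD hdiff2
    have hyq : y + (p - x) = q := by rw [← hqp]; abel
    refine ⟨hyq ▸ hq, ?_⟩
    rw [hyq, hw]
  intro x hx y hy hpq
  constructor
  · ext h
    simp only [patch, shiftSet, mem_inter_iff, mem_image, mem_ball_zero_iff]
    constructor
    · rintro ⟨hb, p, hp, rfl⟩
      exact ⟨hb, y + (p - x), (key x hx y hy hpq p hp hb).1, by abel⟩
    · rintro ⟨hb, p, hp, rfl⟩
      exact ⟨hb, x + (p - y), (key y hy x hx hpq.symm p hp hb).1, by abel⟩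
  · intro h hh
    simp only [patch, shiftSet, mem_inter_iff, mem_image, mem_ball_zero_iff] at hh
    obtain ⟨hb, p, hp, rfl⟩ := hh
    obtain ⟨-, heq⟩ := key x hx y hy hpq p hp hb
    have hxp : x + (p - x) = p := by abel
    rw [hxp, heq]
end
end

section
/- Let P ⊆ ℝⁿ be a Delone set of finite local complexity. There exists ε with 0 < ε < 1 such that for every differentiable function φ : ℝⁿ → ℝⁿ whose derivative map dφ is strongly P-equivariant and which satisfies sup_{x ∈ ℝⁿ} ‖Dφ(x) − I‖ < ε, the following holds: for every r > 0 there exists r' > 0 such that for all x, y ∈ ℝⁿ, B_{r'}[φ(P) − φ(x)] = B_{r'}[φ(P) − φ(y)] implies B_r[P − x] = B_r[P − y]. -/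
open Metric Set

noncomputable section

lemma aux_finite_sep {n : ℕ} (A : Set (Euc n)) (δ ρ : ℝ) (hδ : 0 < δ)
    (hA : A ⊆ ball 0 ρ) (hsep : ∀ a ∈ A, ∀ b ∈ A, a ≠ b → δ ≤ ‖a - b‖) : A.Finite := by
  by_contra hinf
  haveI : Infinite A := Set.infinite_coe_iff.2 hinf
  obtain ⟨t, htfin, hcov⟩ := (totallyBounded_iff.1 ((isCompact_closedBall (0 : Euc n) ρ).totallyBounded))
    (δ/3) (by linarith)
  have hmem : ∀ a : A, ∃ y ∈ t, (a : Euc n) ∈ ball y (δ/3) := by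
    intro a
    have := hcov (ball_subset_closedBall (hA a.2))
    simpa using this
  choose f hf1 hf2 using hmem
  haveI : Finite t := htfin
  obtain ⟨a, b, hab, hfab⟩ := Finite.exists_ne_map_eq_of_infinite
    (fun a : A => (⟨f a, hf1 a⟩ : t))
  have hval : f a = f b := congrArg Subtype.val hfab
  have hne : (a : Euc n) ≠ b := fun h => hab (Subtype.ext h)
  have h1 := hf2 a
  have h2 := hf2 b
  have : dist (a : Euc n) (b : Euc n) < δ := by
    rw [hval] at h1
    calc dist (a : Euc n) b ≤ dist (a : Euc n) (f b) + dist (f b) (b : Euc n) := dist_triangle _ _ _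
    _ < δ/3 + δ/3 := by
        have := mem_ball.1 h1
        have := mem_ball.1 h2
        rw [dist_comm (f b)]
        exact add_lt_add ‹dist (a : Euc n) (f b) < δ/3› ‹dist (b : Euc n) (f b) < δ/3›
    _ ≤ δ := by linarith
  rw [dist_eq_norm] at this
  linarith [hsep a a.2 b b.2 hne]

lemma chain_lemma {n : ℕ} (P : Set (Euc n)) (M : ℝ) (hM : 0 < M)
    (hdens : ∀ z : Euc n, ∃ p ∈ P, ‖p - z‖ < M) (x : Euc n) (S : ℝ)
    (g : Euc n → Euc n)
    (hstep : ∀ p ∈ P, ∀ p' ∈ P, ‖p - x‖ < S + M → ‖p' - x‖ < S + M →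
      ‖p' - p‖ ≤ 3 * M → g p' - p' = g p - p) :
    ∀ a ∈ P, ∀ b ∈ P, ‖a - x‖ < S → ‖b - x‖ < S → g b - b = g a - a := by
  intro a ha b hb hax hbx
  set k : ℕ := max 1 ⌈‖b - a‖ / M⌉₊ with hk
  have hk1 : 1 ≤ k := le_max_left _ _
  have hk0 : (k : ℝ) ≠ 0 := by positivity
  have hkM : ‖b - a‖ ≤ (k : ℝ) * M := by
    have h1 : ‖b - a‖ / M ≤ (⌈‖b - a‖ / M⌉₊ : ℝ) := Nat.le_ceil _
    have h2 : (⌈‖b - a‖ / M⌉₊ : ℝ) ≤ (k : ℝ) := by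
      exact_mod_cast Nat.cast_le.2 (le_max_right 1 _)
    calc ‖b - a‖ = (‖b - a‖ / M) * M := by field_simp
    _ ≤ (k : ℝ) * M := by nlinarith
  -- the segment points
  set z : ℕ → Euc n := fun i => a + ((i : ℝ) / (k : ℝ)) • (b - a) with hz
  -- the chain
  classical
  set f : ℕ → Euc n := fun i =>
    if i = 0 then a else if k ≤ i then b else Classical.choose (hdens (z i)) with hf
  have hzx : ∀ i ≤ k, ‖z i - x‖ < S := by
    intro i hi
    have ht0 : (0:ℝ) ≤ (i : ℝ) / k := by positivity
    have ht1 : (i : ℝ) / k ≤ 1 := by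
      rw [div_le_one (by positivity)]
      exact_mod_cast hi
    set t : ℝ := (i : ℝ) / k
    have : z i - x = (1 - t) • (a - x) + t • (b - x) := by
      simp only [hz]
      module
    rw [this]
    calc ‖(1 - t) • (a - x) + t • (b - x)‖ ≤ (1-t) * ‖a - x‖ + t * ‖b - x‖ := by
          refine (norm_add_le _ _).trans ?_
          rw [norm_smul, norm_smul, Real.norm_eq_abs, Real.norm_eq_abs,
            abs_of_nonneg (by linarith), abs_of_nonneg ht0]
    _ ≤ (1-t) * max ‖a - x‖ ‖b - x‖ + t * max ‖a - x‖ ‖b - x‖ := by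
          exact add_le_add (mul_le_mul_of_nonneg_left (le_max_left _ _) (by linarith)) (mul_le_mul_of_nonneg_left (le_max_right _ _) ht0)
    _ = max ‖a - x‖ ‖b - x‖ := by ring
    _ < S := max_lt hax hbx
  have hfz : ∀ i ≤ k, f i ∈ P ∧ ‖f i - z i‖ < M := by
    intro i hi
    rcases eq_or_ne i 0 with h0 | h0
    · subst h0
      have : z 0 = a := by simp [hz]
      simp [hf, this, ha, hM]
    rcases le_or_gt k i with hki | hki
    · have hik : i = k := le_antisymm hi hki
      have : z i = b := by
        subst hik
        show a + ((k:ℝ)/(k:ℝ)) • (b - a) = b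
        rw [div_self hk0, one_smul]; abel
      simp only [hf, if_neg h0, if_pos hki, this]
      exact ⟨hb, by simpa using hM⟩
    · simp only [hf, if_neg h0, if_neg (not_le.2 hki)]
      exact Classical.choose_spec (hdens (z i))
  have hfx : ∀ i ≤ k, ‖f i - x‖ < S + M := by
    intro i hi
    calc ‖f i - x‖ ≤ ‖f i - z i‖ + ‖z i - x‖ := by
          have : f i - x = (f i - z i) + (z i - x) := by abel
          rw [this]; exact norm_add_le _ _
    _ < M + S := add_lt_add (hfz i hi).2 (hzx i hi)
    _ = S + M := by ring
  have hzstep : ∀ i : ℕ, ‖z (i+1) - z i‖ ≤ M := by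
    intro i
    have : z (i+1) - z i = ((1 : ℝ) / k) • (b - a) := by
      simp only [hz]
      push_cast
      module
    rw [this, norm_smul, Real.norm_eq_abs, abs_of_nonneg (by positivity)]
    rw [div_mul_eq_mul_div, one_mul, div_le_iff₀ (by positivity)]
    linarith [hkM]
  have hstep' : ∀ i, i + 1 ≤ k → g (f (i+1)) - f (i+1) = g (f i) - f i := by
    intro i hik
    refine hstep (f i) (hfz i (by omega)).1 (f (i+1)) (hfz (i+1) hik).1
      (hfx i (by omega)) (hfx (i+1) hik) ?_
    calc ‖f (i+1) - f i‖ ≤ ‖f (i+1) - z (i+1)‖ + ‖z (i+1) - z i‖ + ‖z i - f i‖ := by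
          have : f (i+1) - f i = (f (i+1) - z (i+1)) + (z (i+1) - z i) + (z i - f i) := by abel
          rw [this]
          exact (norm_add_le _ _).trans (by gcongr; exact norm_add_le _ _)
    _ ≤ M + M + M := by
          refine add_le_add (add_le_add (hfz (i+1) hik).2.le (hzstep i)) ?_
          rw [norm_sub_rev]
          exact (hfz i (by omega)).2.le
    _ = 3 * M := by ring
  have hind : ∀ i ≤ k, g (f i) - f i = g (f 0) - f 0 := by
    intro i
    induction i with
    | zero => intro _; rfl
    | succ j ih => intro hj; rw [hstep' j hj]; exact ih (by omega)
  have hfk : f k = b := by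
    simp only [hf, if_pos (le_refl k)]
    have : k ≠ 0 := by omega
    simp [this]
  have hf0 : f 0 = a := by simp [hf]
  have := hind k (le_refl k)
  rwa [hfk, hf0] at this

set_option maxHeartbeats 1000000 in
theorem stmt17 {n : ℕ} (P : Set (Euc n))
    (hUD : UnifDiscrete P) (hRD : RelDense P) (hFLC : FLC P) :
    ∃ ε : ℝ, 0 < ε ∧ ε < 1 ∧
      ∀ φ : Euc n → Euc n, Differentiable ℝ φ →
      StrongEquiv P (fderiv ℝ φ) →
      (∀ x : Euc n, ‖fderiv ℝ φ x - ContinuousLinearMap.id ℝ (Euc n)‖ < ε) →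
      ∀ r > 0, ∃ r' > 0, ∀ x y : Euc n,
        patch (φ '' P) r' (φ x) = patch (φ '' P) r' (φ y) →
        patch P r x = patch P r y := by
  obtain ⟨δ, hδ, hsepP⟩ := hUD
  obtain ⟨M, hM, hdens⟩ := hRD
  -- finite set of short difference vectors
  set V : Set (Euc n) := {v | ∃ p ∈ P, ∃ q ∈ P, v = p - q ∧ ‖v‖ ≤ 4 * M} with hV
  have hVfin : V.Finite := by
    have hpat := hFLC (4*M+1) (by linarith)
    refine Set.Finite.subset (Set.Finite.sUnion hpat ?_) ?_
    · rintro s ⟨q, hq, rfl⟩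
      refine aux_finite_sep _ δ (4*M+1) hδ ?_ ?_
      · exact fun v hv => hv.1
      · rintro v ⟨-, p, hp, rfl⟩ w ⟨-, p', hp', rfl⟩ hne
        have : p ≠ p' := fun h => hne (by rw [h])
        have := hsepP p hp p' hp' this
        calc δ ≤ ‖p - p'‖ := this
        _ = ‖(p - q) - (p' - q)‖ := by congr 1; abel
        _ ≤ _ := le_refl _
    · rintro v ⟨p, hp, q, hq, rfl, hle⟩
      refine ⟨patch P (4*M+1) q, ⟨q, hq, rfl⟩, ?_⟩
      exact ⟨mem_ball.2 (by rw [dist_eq_norm, sub_zero]; linarith), ⟨p, hp, rfl⟩⟩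
  -- minimal gap between distinct vectors of V
  obtain ⟨d, hd0, hdprop⟩ : ∃ d > 0, ∀ v ∈ V, ∀ w ∈ V, ‖v - w‖ < d → v = w := by
    set D : Set ℝ := {t | ∃ v ∈ V, ∃ w ∈ V, v ≠ w ∧ t = ‖v - w‖} with hD
    have hDfin : D.Finite := by
      have : D ⊆ (fun p : Euc n × Euc n => ‖p.1 - p.2‖) '' (V ×ˢ V) := by
        rintro t ⟨v, hv, w, hw, -, rfl⟩
        exact ⟨(v, w), ⟨hv, hw⟩, rfl⟩
      exact Set.Finite.subset ((hVfin.prod hVfin).image _) this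
    by_cases hDne : D.Nonempty
    · have hne' : hDfin.toFinset.Nonempty := by
        simpa [Set.Finite.toFinset_nonempty] using hDne
      refine ⟨hDfin.toFinset.min' hne', ?_, ?_⟩
      · have : hDfin.toFinset.min' hne' ∈ D := by
          simpa using hDfin.toFinset.min'_mem hne'
        obtain ⟨v, hv, w, hw, hne, heq⟩ := this
        rw [heq]
        exact norm_sub_pos_iff.2 hne
      · intro v hv w hw hlt
        by_contra hne
        have : ‖v - w‖ ∈ hDfin.toFinset := by
          simp only [Set.Finite.mem_toFinset]
          exact ⟨v, hv, w, hw, hne, rfl⟩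
        linarith [hDfin.toFinset.min'_le _ this]
    · refine ⟨1, one_pos, fun v hv w hw _ => ?_⟩
      by_contra hne
      exact hDne ⟨‖v - w‖, v, hv, w, hw, hne, rfl⟩
  -- choose ε
  refine ⟨min (1/7) (d / (8 * (M + 1))), lt_min (by norm_num) (by positivity), ?_, ?_⟩
  · calc min (1/7) (d / (8 * (M + 1))) ≤ 1/7 := min_le_left _ _
    _ < 1 := by norm_num
  set ε : ℝ := min (1/7) (d / (8 * (M + 1))) with hε
  have hε7 : ε ≤ 1/7 := min_le_left _ _
  have hε0 : 0 < ε := lt_min (by norm_num) (by positivity)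
  have hεd : 7 * ε * M < d := by
    have h1 : ε ≤ d / (8 * (M + 1)) := min_le_right _ _
    have h2 : 7 * ε * M ≤ 7 * (d / (8 * (M + 1))) * M := by nlinarith
    have h3 : 7 * (d / (8 * (M + 1))) * M < d := by
      have hMp : (0:ℝ) < 8 * (M + 1) := by positivity
      rw [mul_div_assoc', div_mul_eq_mul_div, div_lt_iff₀ hMp]
      nlinarith
    linarith
  intro φ hdiff hSE hnorm r hr
  -- mean value estimates
  have E : ∀ a b : Euc n, ‖φ b - φ a - (b - a)‖ ≤ ε * ‖b - a‖ := by
    intro a b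
    have hg : ∀ u : Euc n, HasFDerivAt (fun w => φ w - w)
        (fderiv ℝ φ u - ContinuousLinearMap.id ℝ (Euc n)) u :=
      fun u => (hdiff u).hasFDerivAt.sub (hasFDerivAt_id u)
    have := (convex_univ (𝕜 := ℝ) (E := Euc n)).norm_image_sub_le_of_norm_hasFDerivWithin_le
      (f := fun w => φ w - w) (f' := fun u => fderiv ℝ φ u - ContinuousLinearMap.id ℝ (Euc n))
      (fun u _ => (hg u).hasFDerivWithinAt) (fun u _ => (hnorm u).le)
      (mem_univ a) (mem_univ b)
    calc ‖φ b - φ a - (b - a)‖ = ‖(φ b - b) - (φ a - a)‖ := by congr 1; abel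
    _ ≤ ε * ‖b - a‖ := this
  have up : ∀ a b : Euc n, ‖φ b - φ a‖ ≤ (1 + ε) * ‖b - a‖ := by
    intro a b
    calc ‖φ b - φ a‖ = ‖(φ b - φ a - (b - a)) + (b - a)‖ := by congr 1; abel
    _ ≤ ‖φ b - φ a - (b - a)‖ + ‖b - a‖ := norm_add_le _ _
    _ ≤ ε * ‖b - a‖ + ‖b - a‖ := by linarith [E a b]
    _ = (1 + ε) * ‖b - a‖ := by ring
  have low : ∀ a b : Euc n, (1 - ε) * ‖b - a‖ ≤ ‖φ b - φ a‖ := by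
    intro a b
    have : ‖b - a‖ ≤ ‖φ b - φ a‖ + ε * ‖b - a‖ := by
      calc ‖b - a‖ = ‖(φ b - φ a) - (φ b - φ a - (b - a))‖ := by congr 1; abel
      _ ≤ ‖φ b - φ a‖ + ‖φ b - φ a - (b - a)‖ := norm_sub_le _ _
      _ ≤ ‖φ b - φ a‖ + ε * ‖b - a‖ := by linarith [E a b]
    linarith
  have hinj : ∀ a b : Euc n, φ a = φ b → a = b := by
    intro a b hab
    have := low a b
    rw [hab, sub_self, norm_zero] at this
    have h1 : (0:ℝ) < 1 - ε := by linarith [hε7]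
    have h2 : ‖b - a‖ ≤ 0 := by nlinarith
    have h3 : b - a = 0 := norm_eq_zero.1 (le_antisymm h2 (norm_nonneg _))
    have : b = a := by
      have := sub_eq_zero.1 h3
      exact this
    exact this.symm
  -- the equivariance range
  obtain ⟨R, hR0, hEq⟩ := hSE
  -- the radii
  set T : ℝ := M + r + 1 with hT
  set S : ℝ := T + R + M + 1 with hS
  have hT0 : 0 < T := by positivity
  have hS0 : 0 < S := by positivity
  have hMS : M < S := by simp only [hS, hT]; linarith
  refine ⟨4 * S + 4 * M + 4, by positivity, ?_⟩
  intro x y hpatch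
  set r' : ℝ := 4 * S + 4 * M + 4 with hr'
  have hεa : (0:ℝ) < 1 - ε := by linarith [hε7]
  have hεb : 1 + ε ≤ 8/7 := by linarith [hε7]
  have hεc : 6/7 ≤ 1 - ε := by linarith [hε7]
  -- forward correspondence
  have key : ∀ p : Euc n, p ∈ P → ‖p - x‖ < S + 2*M →
      ∃ q, q ∈ P ∧ φ q = φ p - φ x + φ y := by
    intro p hp hpx
    have hnv : ‖φ p - φ x‖ < r' := by
      calc ‖φ p - φ x‖ ≤ (1 + ε) * ‖p - x‖ := up x p
      _ < 2 * (S + 2*M) := by nlinarith [norm_nonneg (p - x)]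
      _ < r' := by simp only [hr']; linarith
    have hmem : φ p - φ x ∈ patch (φ '' P) r' (φ x) := by
      refine ⟨mem_ball.2 ?_, ⟨φ p, ⟨p, hp, rfl⟩, rfl⟩⟩
      rw [dist_eq_norm, sub_zero]; exact hnv
    rw [hpatch] at hmem
    obtain ⟨-, b, ⟨q, hq, rfl⟩, hb⟩ := hmem
    exact ⟨q, hq, by rw [← hb]; module⟩
  choose! ψ hψP hψφ using key
  -- backward correspondence
  have key' : ∀ q : Euc n, q ∈ P → ‖q - y‖ < 2*S + 2*M →
      ∃ q', q' ∈ P ∧ φ q' = φ q - φ y + φ x := by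
    intro q hq hqy
    have hnv : ‖φ q - φ y‖ < r' := by
      calc ‖φ q - φ y‖ ≤ (1 + ε) * ‖q - y‖ := up y q
      _ < 2 * (2*S + 2*M) := by nlinarith [norm_nonneg (q - y)]
      _ < r' := by simp only [hr']; linarith
    have hmem : φ q - φ y ∈ patch (φ '' P) r' (φ y) := by
      refine ⟨mem_ball.2 ?_, ⟨φ q, ⟨q, hq, rfl⟩, rfl⟩⟩
      rw [dist_eq_norm, sub_zero]; exact hnv
    rw [← hpatch] at hmem
    obtain ⟨-, b, ⟨q', hq', rfl⟩, hb⟩ := hmem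
    exact ⟨q', hq', by rw [← hb]; module⟩
  choose! ψ' hψ'P hψ'φ using key'
  -- generic step rigidity
  have stepgen : ∀ gp gp' p p' : Euc n, p ∈ P → p' ∈ P → gp ∈ P → gp' ∈ P →
      φ gp' - φ gp = φ p' - φ p →
      ‖p' - p‖ ≤ 3 * M → gp' - p' = gp - p := by
    intro gp gp' p p' hp hp' hgp hgp' hφe hd3
    set v : Euc n := gp' - gp with hv
    set w : Euc n := p' - p with hw
    have hwV : w ∈ V := ⟨p', hp', p, hp, rfl, by linarith⟩
    have hvn : ‖v‖ ≤ 4 * M := by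
      have h1 : (1 - ε) * ‖v‖ ≤ ‖φ gp' - φ gp‖ := low gp gp'
      rw [hφe] at h1
      have h2 : ‖φ p' - φ p‖ ≤ (1 + ε) * ‖w‖ := up p p'
      nlinarith [norm_nonneg v, norm_nonneg w]
    have hvV : v ∈ V := ⟨gp', hgp', gp, hgp, rfl, hvn⟩
    have hclose : ‖v - w‖ < d := by
      calc ‖v - w‖ = ‖(v - (φ gp' - φ gp)) + ((φ p' - φ p) - w)‖ := by
            rw [hφe]; congr 1; abel
      _ ≤ ‖v - (φ gp' - φ gp)‖ + ‖(φ p' - φ p) - w‖ := norm_add_le _ _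
      _ ≤ ε * ‖v‖ + ε * ‖w‖ := by
            refine add_le_add ?_ ?_
            · rw [norm_sub_rev]; exact E gp gp'
            · exact E p p'
      _ ≤ ε * (4 * M) + ε * (3 * M) := by
            have b1 : ε * ‖v‖ ≤ ε * (4 * M) := mul_le_mul_of_nonneg_left hvn hε0.le
            have b2 : ε * ‖w‖ ≤ ε * (3 * M) := mul_le_mul_of_nonneg_left hd3 hε0.le
            exact add_le_add b1 b2
      _ = 7 * ε * M := by ring
      _ < d := hεd
    have := hdprop v hvV w hwV hclose
    rw [hv, hw] at this
    have heq : gp' - gp = p' - p := this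
    calc gp' - p' = (gp' - gp) - (p' - p) + (gp - p) := by abel
    _ = gp - p := by rw [heq]; abel
  -- translation constants via chains
  obtain ⟨p₀, hp₀P, hp₀x⟩ := hdens x
  set c : Euc n := ψ p₀ - p₀ with hc
  have hψdom : ∀ p ∈ P, ‖p - x‖ < (S + M) + M → ‖p - x‖ < S + 2*M := by
    intro p _ h; linarith
  have hCx : ∀ a ∈ P, ∀ b ∈ P, ‖a - x‖ < S + M → ‖b - x‖ < S + M →
      ψ b - b = ψ a - a := by
    refine chain_lemma P M hM hdens x (S + M) ψ ?_
    intro p hp p' hp' hpx hp'x h3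
    have hdp : ‖p - x‖ < S + 2*M := by linarith
    have hdp' : ‖p' - x‖ < S + 2*M := by linarith
    refine stepgen (ψ p) (ψ p') p p' hp hp' (hψP p hp hdp) (hψP p' hp' hdp') ?_ h3
    rw [hψφ p hp hdp, hψφ p' hp' hdp']
    abel
  have hA1 : ∀ p ∈ P, ‖p - x‖ < S + M → ψ p = p + c := by
    intro p hp hpx
    have := hCx p₀ hp₀P p hp (by linarith) hpx
    rw [hc, ← this]; abel
  -- y side
  obtain ⟨q₀, hq₀P, hq₀y⟩ := hdens y
  set c' : Euc n := ψ' q₀ - q₀ with hc'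
  have hCy : ∀ a ∈ P, ∀ b ∈ P, ‖a - y‖ < (2*S + M) → ‖b - y‖ < (2*S + M) →
      ψ' b - b = ψ' a - a := by
    refine chain_lemma P M hM hdens y (2*S + M) ψ' ?_
    intro p hp p' hp' hpy hp'y h3
    have hdp : ‖p - y‖ < 2*S + 2*M := by linarith
    have hdp' : ‖p' - y‖ < 2*S + 2*M := by linarith
    refine stepgen (ψ' p) (ψ' p') p p' hp hp' (hψ'P p hp hdp) (hψ'P p' hp' hdp') ?_ h3
    rw [hψ'φ p hp hdp, hψ'φ p' hp' hdp']
    abel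
  have hA2' : ∀ q ∈ P, ‖q - y‖ < 2*S + M → ψ' q = q + c' := by
    intro q hq hqy
    have := hCy q₀ hq₀P q hq (by linarith) hqy
    rw [hc', ← this]; abel
  -- ψ p₀ is close to y
  have hψp₀y : ‖ψ p₀ - y‖ ≤ (8/6) * M := by
    have hdom : ‖p₀ - x‖ < S + 2*M := by linarith
    have h1 : (1 - ε) * ‖ψ p₀ - y‖ ≤ ‖φ (ψ p₀) - φ y‖ := low y (ψ p₀)
    rw [hψφ p₀ hp₀P hdom] at h1
    have h2 : ‖φ p₀ - φ x + φ y - φ y‖ = ‖φ p₀ - φ x‖ := by congr 1; abel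
    rw [h2] at h1
    have h3 : ‖φ p₀ - φ x‖ ≤ (1 + ε) * ‖p₀ - x‖ := up x p₀
    nlinarith [norm_nonneg (ψ p₀ - y), norm_nonneg (p₀ - x)]
  -- c' = -c
  have hcc' : c' = -c := by
    have hdom : ‖p₀ - x‖ < S + 2*M := by linarith
    have hψp₀P : ψ p₀ ∈ P := hψP p₀ hp₀P hdom
    have hywell : ‖ψ p₀ - y‖ < 2*S + M := by
      have := hψp₀y
      nlinarith [hS0, hMS]
    have h1 : ψ' (ψ p₀) = ψ p₀ + c' := hA2' (ψ p₀) hψp₀P hywell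
    have h2 : φ (ψ' (ψ p₀)) = φ (ψ p₀) - φ y + φ x := hψ'φ (ψ p₀) hψp₀P (by linarith)
    rw [hψφ p₀ hp₀P hdom] at h2
    have h3 : φ (ψ' (ψ p₀)) = φ p₀ := by rw [h2]; abel
    have h4 : ψ' (ψ p₀) = p₀ := hinj _ _ h3
    rw [h1] at h4
    have h5 : ψ p₀ = p₀ + c := hA1 p₀ hp₀P (by linarith)
    rw [h5] at h4
    have h6 : c + c' = 0 := by
      calc c + c' = (p₀ + c + c') - p₀ := by abel
      _ = p₀ - p₀ := by rw [h4]
      _ = 0 := by abel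
    calc c' = (c + c') - c := by abel
    _ = 0 - c := by rw [h6]
    _ = -c := by abel
  -- translation facts
  have hA1f : ∀ p ∈ P, ‖p - x‖ < S + M → p + c ∈ P := by
    intro p hp hpx
    have := hA1 p hp hpx
    rw [← this]
    exact hψP p hp (by linarith)
  have hA2f : ∀ q ∈ P, ‖q - y‖ < 2*S + M → q - c ∈ P := by
    intro q hq hqy
    have h1 := hA2' q hq hqy
    rw [hcc'] at h1
    have h2 : q + -c = q - c := by abel
    rw [h2] at h1
    rw [← h1]
    exact hψ'P q hq (by linarith)
  -- bound on c - (y - x)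
  have hcbound : ‖c - (y - x)‖ ≤ M := by
    have hdom : ‖p₀ - x‖ < S + 2*M := by linarith
    have hid : c - (y - x) = ((ψ p₀ - y) - (φ (ψ p₀) - φ y)) + ((φ p₀ - φ x) - (p₀ - x)) := by
      rw [hψφ p₀ hp₀P hdom, hc]; abel
    have b1 : ‖(ψ p₀ - y) - (φ (ψ p₀) - φ y)‖ ≤ ε * ‖ψ p₀ - y‖ := by
      rw [norm_sub_rev]; exact E y (ψ p₀)
    have b2 : ‖(φ p₀ - φ x) - (p₀ - x)‖ ≤ ε * ‖p₀ - x‖ := E x p₀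
    calc ‖c - (y - x)‖ ≤ ‖(ψ p₀ - y) - (φ (ψ p₀) - φ y)‖ + ‖(φ p₀ - φ x) - (p₀ - x)‖ := by
          rw [hid]; exact norm_add_le _ _
    _ ≤ ε * ‖ψ p₀ - y‖ + ε * ‖p₀ - x‖ := add_le_add b1 b2
    _ ≤ M := by nlinarith [hψp₀y, hp₀x, norm_nonneg (ψ p₀ - y), norm_nonneg (p₀ - x)]
  -- patch invariance under translation by c
  have hshift : ∀ u : Euc n, ‖u - x‖ ≤ T → patch P R u = patch P R (u + c) := by
    intro u hu
    ext z
    constructor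
    · rintro ⟨hz, p, hp, rfl⟩
      have hpu : ‖p - u‖ < R := by
        have := mem_ball.1 hz
        rwa [dist_eq_norm, sub_zero] at this
      have hpx : ‖p - x‖ < S + M := by
        calc ‖p - x‖ ≤ ‖p - u‖ + ‖u - x‖ := by
              have : p - x = (p - u) + (u - x) := by abel
              rw [this]; exact norm_add_le _ _
        _ < R + T := by linarith
        _ < S + M := by simp only [hS]; linarith
      refine ⟨hz, p + c, hA1f p hp hpx, ?_⟩
      show (p + c) - (u + c) = p - u
      abel
    · rintro ⟨hz, q, hq, rfl⟩
      have hqu : ‖q - (u + c)‖ < R := by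
        have := mem_ball.1 hz
        rwa [dist_eq_norm, sub_zero] at this
      have hqy : ‖q - y‖ < 2*S + M := by
        calc ‖q - y‖ ≤ ‖q - (u + c)‖ + ‖u - x‖ + ‖c - (y - x)‖ := by
              have : q - y = (q - (u + c)) + (u - x) + (c - (y - x)) := by abel
              rw [this]
              exact (norm_add_le _ _).trans (by gcongr; exact norm_add_le _ _)
        _ < R + T + M := by linarith
        _ < 2*S + M := by simp only [hS]; linarith
      refine ⟨hz, q - c, hA2f q hq hqy, ?_⟩
      show (q - c) - u = q - (u + c)
      abel
  -- derivative equality and constancy of the displacement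
  have hDeq : ∀ u : Euc n, ‖u - x‖ ≤ T → fderiv ℝ φ u = fderiv ℝ φ (u + c) :=
    fun u hu => hEq u (u + c) (hshift u hu)
  have hder : ∀ u ∈ closedBall x T, HasFDerivWithinAt (fun w => φ (w + c) - φ w)
      ((0 : Euc n →L[ℝ] Euc n)) (closedBall x T) u := by
    intro u hu
    have h1 : HasFDerivAt (fun w : Euc n => w + c) (ContinuousLinearMap.id ℝ (Euc n)) u :=
      (hasFDerivAt_id u).add_const c
    have h2 : HasFDerivAt (fun w => φ (w + c))
        ((fderiv ℝ φ (u + c)).comp (ContinuousLinearMap.id ℝ (Euc n))) u :=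
      HasFDerivAt.comp u (hdiff (u + c)).hasFDerivAt h1
    have h3 : HasFDerivAt (fun w => φ (w + c) - φ w)
        ((fderiv ℝ φ (u + c)).comp (ContinuousLinearMap.id ℝ (Euc n)) - fderiv ℝ φ u) u :=
      h2.sub (hdiff u).hasFDerivAt
    have hTu : ‖u - x‖ ≤ T := by
      have := mem_closedBall.1 hu
      rwa [dist_eq_norm] at this
    have h4 : fderiv ℝ φ (u + c) = fderiv ℝ φ u := (hDeq u hTu).symm
    rw [ContinuousLinearMap.comp_id, h4, sub_self] at h3
    exact h3.hasFDerivWithinAt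
  have hp₀mem : p₀ ∈ closedBall x T := by
    rw [mem_closedBall, dist_eq_norm]
    simp only [hT]; linarith
  have hconst : φ (p₀ + c) - φ p₀ = φ (x + c) - φ x := by
    have hb := (convex_closedBall x T).norm_image_sub_le_of_norm_hasFDerivWithin_le
      hder (fun u _ => by rw [norm_zero]) (mem_closedBall_self hT0.le) hp₀mem
    have : ‖(φ (p₀ + c) - φ p₀) - (φ (x + c) - φ x)‖ ≤ 0 := by
      calc ‖(φ (p₀ + c) - φ p₀) - (φ (x + c) - φ x)‖ ≤ 0 * ‖p₀ - x‖ := hb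
      _ = 0 := by ring
    have := norm_eq_zero.1 (le_antisymm this (norm_nonneg _))
    exact sub_eq_zero.1 this
  have hcyx : c = y - x := by
    have h5 : ψ p₀ = p₀ + c := hA1 p₀ hp₀P (by linarith)
    have h7 : φ (p₀ + c) - φ p₀ = φ y - φ x := by
      rw [← h5, hψφ p₀ hp₀P (by linarith)]; abel
    have h8 : φ (x + c) - φ x = φ y - φ x := by rw [← hconst, h7]
    have h9 : φ (x + c) = φ y := by
      have := congrArg (fun z => z + φ x) h8
      simpa using by
        calc φ (x + c) = (φ (x + c) - φ x) + φ x := by abel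
        _ = (φ y - φ x) + φ x := by rw [h8]
        _ = φ y := by abel
    have h10 : x + c = y := hinj _ _ h9
    calc c = (x + c) - x := by abel
    _ = y - x := by rw [h10]
  -- conclusion
  ext z
  constructor
  · rintro ⟨hz, p, hp, rfl⟩
    have hpx : ‖p - x‖ < r := by
      have := mem_ball.1 hz
      rwa [dist_eq_norm, sub_zero] at this
    have hpc : p + c ∈ P := hA1f p hp (by simp only [hS, hT]; linarith)
    refine ⟨hz, p + c, hpc, ?_⟩
    show (p + c) - y = p - x
    rw [hcyx]; abel
  · rintro ⟨hz, q, hq, rfl⟩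
    have hqy : ‖q - y‖ < r := by
      have := mem_ball.1 hz
      rwa [dist_eq_norm, sub_zero] at this
    have hqc : q - c ∈ P := hA2f q hq (by simp only [hS, hT]; linarith)
    refine ⟨hz, q - c, hqc, ?_⟩
    show (q - c) - x = q - y
    rw [hcyx]; abel
end
end
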